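/- Fix positive integers q and n with n < q, an integer s ≥ 2, real numbers λ > 0, γ < 0, ν > 0, M > 0, z1 > 0 and t1 > 0, and set U_c = (λ/|γ|)^{1/(s−1)}. Suppose z : [t1,∞) → [−z1,z1] is differentiable and satisfies z'(t) = t^{−n/q}·(U_c + z(t))·(λ + γ·(U_c + z(t))^{s−1}) + p(t) for all t ≥ t1, where |p(t)| ≤ M·t^{−n/q}·(t^{−ν} + t^{−1/q}). Then there exist z2 ∈ (0,z1], t2 ≥ t1 and K > 0 such that every such z with |z(t2)| ≤ z2 satisfies z(t)² ≤ K·(t^{−ν} + t^{−1/q}) for all t ≥ t2; in particular z(t) → 0 as t → ∞. -/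

import Mathlib

open Real Set Filter

set_option maxHeartbeats 1000000 in
lemma lyap_aux (γ Uc zx : ℝ) (hγ : γ < 0) (hUc : 0 < Uc) (m : ℕ) (hm : 1 ≤ m)
    (hz : |zx| ≤ Uc / 2) :
    γ * ((Uc + zx) * (zx * ((Uc + zx) ^ m - Uc ^ m))) ≤ γ * ((m : ℝ) * (Uc / 2) ^ m) * zx ^ 2 := by
  set r : ℝ := Uc / 2 with hr
  have hrpos : 0 < r := by positivity
  obtain ⟨hz1, hz2⟩ := abs_le.mp hz
  have ha : r ≤ Uc + zx := by simp only [hr] at *; linarith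
  have hb : r ≤ Uc := by simp only [hr]; linarith
  set S : ℝ := ∑ i ∈ Finset.range m, (Uc + zx) ^ i * Uc ^ (m - 1 - i) with hSdef
  have hgeom : S * ((Uc + zx) - Uc) = (Uc + zx) ^ m - Uc ^ m := geom_sum₂_mul _ _ m
  have hP : zx * ((Uc + zx) ^ m - Uc ^ m) = zx ^ 2 * S := by
    rw [← hgeom]; ring
  have hS : (m : ℝ) * r ^ (m - 1) ≤ S := by
    have : ∀ i ∈ Finset.range m, r ^ (m - 1) ≤ (Uc + zx) ^ i * Uc ^ (m - 1 - i) := by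
      intro i hi
      have hi' : i < m := Finset.mem_range.mp hi
      have h1 : r ^ i ≤ (Uc + zx) ^ i := pow_le_pow_left₀ hrpos.le ha i
      have h2 : r ^ (m - 1 - i) ≤ Uc ^ (m - 1 - i) := pow_le_pow_left₀ hrpos.le hb _
      have hexp : i + (m - 1 - i) = m - 1 := by omega
      calc r ^ (m - 1) = r ^ i * r ^ (m - 1 - i) := by rw [← pow_add, hexp]
        _ ≤ (Uc + zx) ^ i * Uc ^ (m - 1 - i) :=
          mul_le_mul h1 h2 (by positivity) (pow_nonneg (by linarith) i)
    calc (m : ℝ) * r ^ (m - 1) = ∑ _i ∈ Finset.range m, r ^ (m - 1) := by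
          rw [Finset.sum_const, Finset.card_range, nsmul_eq_mul]
      _ ≤ S := Finset.sum_le_sum this
  have hkey : r * ((m : ℝ) * r ^ (m - 1) * zx ^ 2) ≤ (Uc + zx) * (zx ^ 2 * S) := by
    have h1 : (m : ℝ) * r ^ (m - 1) * zx ^ 2 ≤ zx ^ 2 * S := by
      rw [mul_comm (zx ^ 2) S]
      exact mul_le_mul_of_nonneg_right hS (sq_nonneg _)
    exact mul_le_mul ha h1 (by positivity) (by linarith)
  have hrm : r * ((m : ℝ) * r ^ (m - 1) * zx ^ 2) = (m : ℝ) * r ^ m * zx ^ 2 := by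
    have : r * r ^ (m - 1) = r ^ m := by
      rw [← pow_succ']; congr 1; omega
    rw [← this]; ring
  calc γ * ((Uc + zx) * (zx * ((Uc + zx) ^ m - Uc ^ m)))
      = γ * ((Uc + zx) * (zx ^ 2 * S)) := by rw [hP]
    _ ≤ γ * (r * ((m : ℝ) * r ^ (m - 1) * zx ^ 2)) :=
        mul_le_mul_of_nonpos_left hkey hγ.le
    _ = γ * ((m : ℝ) * r ^ m) * zx ^ 2 := by rw [hrm]; ring

set_option maxHeartbeats 1000000 in
/-- stability of the equilibrium `U_c = (λ/|γ|)^{1/(s−1)}` of the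
scaled equation `z' = t^{−n/q}(U_c+z)(λ+γ(U_c+z)^{s−1}) + p(t)` with respect to
the decaying perturbation `p`, with the quantitative bound
`z(t)² ≤ K(t^{−ν} + t^{−1/q})`; in particular `z(t) → 0`. -/
theorem perturbed_equilibrium_stability
    (q n s : ℕ) (hq : 0 < q) (hn : 0 < n) (hnq : n < q) (hs : 2 ≤ s)
    (lam γ ν M z1 t1 : ℝ) (hlam : 0 < lam) (hγ : γ < 0) (hν : 0 < ν)
    (hM : 0 < M) (hz1 : 0 < z1) (ht1 : 0 < t1) :
    ∀ Uc : ℝ, Uc = (lam / |γ|) ^ (1 / ((s:ℝ) - 1)) →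
    ∃ z2 ∈ Set.Ioc (0:ℝ) z1, ∃ t2 ≥ t1, ∃ K > 0,
      ∀ z p : ℝ → ℝ,
        (∀ t ≥ t1, z t ∈ Set.Icc (-z1) z1) →
        (∀ t ≥ t1, |p t| ≤ M * t ^ (-(n:ℝ)/(q:ℝ)) * (t ^ (-ν) + t ^ (-(1:ℝ)/(q:ℝ)))) →
        (∀ t ≥ t1, HasDerivAt z
          (t ^ (-(n:ℝ)/(q:ℝ)) * (Uc + z t) * (lam + γ * (Uc + z t) ^ (s - 1)) + p t) t) →
        |z t2| ≤ z2 →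
        (∀ t ≥ t2, (z t) ^ 2 ≤ K * (t ^ (-ν) + t ^ (-(1:ℝ)/(q:ℝ)))) ∧
        Filter.Tendsto z Filter.atTop (nhds 0) := by
  intro Uc hUc
  have hγabs : 0 < |γ| := abs_pos.mpr hγ.ne
  have hγ0 : γ ≠ 0 := hγ.ne
  set m := s - 1 with hmdef
  have hm1 : 1 ≤ m := by omega
  have hmR : (m : ℝ) = (s : ℝ) - 1 := by
    rw [hmdef, Nat.cast_sub (by omega : 1 ≤ s)]; norm_num
  have hsne : ((s : ℝ) - 1) ≠ 0 := by
    have : (2 : ℝ) ≤ (s : ℝ) := by exact_mod_cast hs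
    linarith
  have hUcpos : 0 < Uc := by
    rw [hUc]; exact Real.rpow_pos_of_pos (by positivity) _
  have hUcm : Uc ^ m = lam / |γ| := by
    rw [hUc, ← Real.rpow_natCast ((lam / |γ|) ^ (1 / ((s:ℝ) - 1))) m,
      ← Real.rpow_mul (by positivity), hmR, one_div, inv_mul_cancel₀ hsne, Real.rpow_one]
  have hkey : γ * Uc ^ m = -lam := by
    rw [hUcm, abs_of_neg hγ, mul_div_assoc', div_eq_iff (neg_ne_zero.mpr hγ0)]
    ring
  -- the constants
  set c : ℝ := -γ * (m : ℝ) * (Uc / 2) ^ m with hcdef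
  have hcpos : 0 < c := by
    have h1 : (0:ℝ) < -γ := neg_pos.mpr hγ
    have h2 : (0:ℝ) < (m : ℝ) := by exact_mod_cast hm1
    positivity
  set δ : ℝ := min (Uc / 2) z1 with hδdef
  have hδpos : 0 < δ := lt_min (by positivity) hz1
  set C : ℝ := ν + 1 with hCdef
  have hCpos : 0 < C := by positivity
  have hq' : (0:ℝ) < (q:ℝ) := by exact_mod_cast hq
  have hqinv : (0:ℝ) < 1 / (q:ℝ) := by positivity
  have hexp_pos : (0:ℝ) < 1 - (n:ℝ)/(q:ℝ) := by
    have : (n:ℝ) < (q:ℝ) := by exact_mod_cast hnq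
    rw [sub_pos, div_lt_one hq']
    exact this
  -- g tends to zero
  have hgto : Tendsto (fun t : ℝ => t ^ (-ν) + t ^ (-(1:ℝ)/(q:ℝ))) atTop (nhds 0) := by
    have h1 := tendsto_rpow_neg_atTop hν
    have h2 := tendsto_rpow_neg_atTop hqinv
    have h3 : Tendsto (fun t : ℝ => t ^ (-ν) + t ^ (-(1/(q:ℝ)))) atTop (nhds (0 + 0)) :=
      h1.add h2
    simpa [neg_div] using h3
  -- choose t2
  have e1 : ∀ᶠ t : ℝ in atTop, t1 ≤ t := eventually_ge_atTop t1
  have e2 : ∀ᶠ t : ℝ in atTop, (1:ℝ) ≤ t := eventually_ge_atTop 1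
  have e3 : ∀ᶠ t : ℝ in atTop, 2 * C / c ≤ t ^ (1 - (n:ℝ)/(q:ℝ)) :=
    (tendsto_rpow_atTop hexp_pos).eventually_ge_atTop _
  have e4 : ∀ᶠ t : ℝ in atTop, M * (t ^ (-ν) + t ^ (-(1:ℝ)/(q:ℝ))) ≤ c * δ / 2 := by
    have h := hgto.const_mul M
    rw [mul_zero] at h
    exact h.eventually (eventually_le_nhds (by positivity))
  obtain ⟨t2, ⟨⟨⟨ht2t1, ht2one⟩, ht2rpow⟩, ht2small⟩⟩ := (((e1.and e2).and e3).and e4).exists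
  have ht2pos : (0:ℝ) < t2 := lt_of_lt_of_le one_pos ht2one
  set g : ℝ → ℝ := fun t => t ^ (-ν) + t ^ (-(1:ℝ)/(q:ℝ)) with hgdef
  have hgpos : ∀ x : ℝ, 0 < x → 0 < g x := by
    intro x hx
    have := Real.rpow_pos_of_pos hx (-ν)
    have := Real.rpow_pos_of_pos hx (-(1:ℝ)/(q:ℝ))
    simp only [hgdef]; linarith
  have hgt2pos : 0 < g t2 := hgpos t2 ht2pos
  set K : ℝ := δ ^ 2 / g t2 with hKdef
  have hKpos : 0 < K := by positivity
  have hKgt2 : K * g t2 = δ ^ 2 := div_mul_cancel₀ _ hgt2pos.ne'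
  refine ⟨δ, ⟨hδpos, min_le_right _ _⟩, t2, ht2t1, K, hKpos, ?_⟩
  intro z p hzb hpb hode hz2
  -- antitonicity of g on [t2, ∞)
  have hganti : ∀ x : ℝ, t2 ≤ x → g x ≤ g t2 := by
    intro x hx
    exact add_le_add
      (Real.rpow_le_rpow_of_nonpos ht2pos hx (by linarith))
      (Real.rpow_le_rpow_of_nonpos ht2pos hx (by rw [neg_div]; linarith))
  -- main quantitative bound
  have main : ∀ T, t2 ≤ T → (z T) ^ 2 ≤ K * g T := by
    intro T hT
    set D : ℝ → ℝ := fun t =>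
      t ^ (-(n:ℝ)/(q:ℝ)) * (Uc + z t) * (lam + γ * (Uc + z t) ^ m) + p t with hDdef
    have hzd : ∀ x ∈ Icc t2 T, HasDerivAt z (D x) x := fun x hx =>
      hode x (le_trans ht2t1 hx.1)
    have hfcont : ContinuousOn (fun t => (z t) ^ 2) (Icc t2 T) := fun x hx =>
      (((hzd x hx).continuousAt).pow 2).continuousWithinAt
    have hf' : ∀ x ∈ Ico t2 T,
        HasDerivWithinAt (fun t => (z t) ^ 2) (2 * z x * D x) (Ici x) x := by
      intro x hx
      have h : HasDerivWithinAt (fun t => (z t) ^ 2) ((2:ℕ) * z x ^ (2-1) * D x) (Ici x) x :=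
        ((hzd x (Ico_subset_Icc_self hx)).pow 2).hasDerivWithinAt
      convert h using 1
      norm_num
    set B' : ℝ → ℝ := fun t =>
      K * ((-ν) * t ^ (-ν - 1) + (-(1:ℝ)/(q:ℝ)) * t ^ (-(1:ℝ)/(q:ℝ) - 1)) with hB'def
    have hBd : ∀ x ∈ Icc t2 T, HasDerivAt (fun t => K * g t) (B' x) x := by
      intro x hx
      have hx0 : x ≠ 0 := (lt_of_lt_of_le ht2pos hx.1).ne'
      have h1 := Real.hasDerivAt_rpow_const (p := -ν) (Or.inl hx0)
      have h2 := Real.hasDerivAt_rpow_const (p := -(1:ℝ)/(q:ℝ)) (Or.inl hx0)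
      exact ((h1.add h2).const_mul K)
    have hBcont : ContinuousOn (fun t => K * g t) (Icc t2 T) := fun x hx =>
      ((hBd x hx).continuousAt).continuousWithinAt
    have hB' : ∀ x ∈ Ico t2 T, HasDerivWithinAt (fun t => K * g t) (B' x) (Ici x) x :=
      fun x hx => (hBd x (Ico_subset_Icc_self hx)).hasDerivWithinAt
    have hinit : (z t2) ^ 2 ≤ K * g t2 := by
      rw [hKgt2]
      calc (z t2) ^ 2 = |z t2| ^ 2 := (sq_abs _).symm
        _ ≤ δ ^ 2 := by
            apply pow_le_pow_left₀ (abs_nonneg _) hz2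
    have bound : ∀ x ∈ Ico t2 T, (z x) ^ 2 = K * g x → 2 * z x * D x < B' x := by
      intro x hx heq
      have hxt2 : t2 ≤ x := hx.1
      have hx0 : (0:ℝ) < x := lt_of_lt_of_le ht2pos hxt2
      have hxt1 : t1 ≤ x := le_trans ht2t1 hxt2
      have hgx : 0 < g x := hgpos x hx0
      have he : (0:ℝ) < x ^ (-(n:ℝ)/(q:ℝ)) := Real.rpow_pos_of_pos hx0 _
      set e : ℝ := x ^ (-(n:ℝ)/(q:ℝ)) with hedef
      -- |z x| ≤ δ ≤ Uc/2
      have hsq : (z x) ^ 2 ≤ δ ^ 2 := by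
        rw [heq, ← hKgt2]
        exact mul_le_mul_of_nonneg_left (hganti x hxt2) hKpos.le
      have habs : |z x| ≤ δ := by
        have h := Real.sqrt_le_sqrt hsq
        rwa [Real.sqrt_sq_eq_abs, Real.sqrt_sq hδpos.le] at h
      have hUchalf : |z x| ≤ Uc / 2 := habs.trans (min_le_left _ _)
      -- Lyapunov estimate
      have hlam_eq : lam + γ * (Uc + z x) ^ m = γ * ((Uc + z x) ^ m - Uc ^ m) := by
        rw [mul_sub]; linarith [hkey]
      have hlyap0 := lyap_aux γ Uc (z x) hγ hUcpos m hm1 hUchalf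
      have hlyap : z x * (e * (Uc + z x) * (lam + γ * (Uc + z x) ^ m)) ≤
          e * (-c * (z x) ^ 2) := by
        rw [hlam_eq]
        have h1 : z x * (e * (Uc + z x) * (γ * ((Uc + z x) ^ m - Uc ^ m)))
            = e * (γ * ((Uc + z x) * (z x * ((Uc + z x) ^ m - Uc ^ m)))) := by ring
        have h2 : γ * ((m:ℝ) * (Uc/2) ^ m) * (z x) ^ 2 = -c * (z x) ^ 2 := by
          rw [hcdef]; ring
        rw [h1]
        calc e * (γ * ((Uc + z x) * (z x * ((Uc + z x) ^ m - Uc ^ m))))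
            ≤ e * (γ * ((m:ℝ) * (Uc/2) ^ m) * (z x) ^ 2) :=
              mul_le_mul_of_nonneg_left hlyap0 he.le
          _ = e * (-c * (z x) ^ 2) := by rw [h2]
      -- perturbation estimate
      have hpx : |p x| ≤ M * e * g x := hpb x hxt1
      have hpert : 2 * (z x * p x) ≤ c * K * e * g x := by
        have h1 : z x * p x ≤ |z x| * |p x| := by
          calc z x * p x ≤ |z x * p x| := le_abs_self _
            _ = |z x| * |p x| := abs_mul _ _
        have h2 : |z x| * |p x| ≤ δ * (M * e * g x) :=
          mul_le_mul habs hpx (abs_nonneg _) hδpos.le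
        have h3 : 2 * (δ * M) ≤ c * K := by
          have h4 : 2 * (δ * M) * g t2 ≤ c * δ ^ 2 := by
            calc 2 * (δ * M) * g t2 = 2 * δ * (M * g t2) := by ring
              _ ≤ 2 * δ * (c * δ / 2) :=
                  mul_le_mul_of_nonneg_left ht2small (by positivity)
              _ = c * δ ^ 2 := by ring
          calc 2 * (δ * M) = 2 * (δ * M) * g t2 / g t2 := by
                field_simp
            _ ≤ c * δ ^ 2 / g t2 := by
                gcongr
            _ = c * K := by rw [hKdef]; ring
        have h5 : 2 * (δ * (M * e * g x)) ≤ c * K * e * g x := by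
          have := mul_le_mul_of_nonneg_right h3 (mul_pos he hgx).le
          calc 2 * (δ * (M * e * g x)) = 2 * (δ * M) * (e * g x) := by ring
            _ ≤ c * K * (e * g x) := this
            _ = c * K * e * g x := by ring
        linarith [mul_le_mul_of_nonneg_left (h1.trans h2) (by norm_num : (0:ℝ) ≤ 2)]
      -- combine: f' ≤ -cKeg
      have hf'le : 2 * z x * D x ≤ -(c * K * e * g x) := by
        have hDx : D x = e * (Uc + z x) * (lam + γ * (Uc + z x) ^ m) + p x := rfl
        have h1 : 2 * z x * D x
            = 2 * (z x * (e * (Uc + z x) * (lam + γ * (Uc + z x) ^ m))) + 2 * (z x * p x) := by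
          rw [hDx]; ring
        have h2 : 2 * (z x * (e * (Uc + z x) * (lam + γ * (Uc + z x) ^ m)))
            ≤ 2 * (e * (-c * (z x) ^ 2)) := by linarith [hlyap]
        have h3 : e * (-c * (z x) ^ 2) = -(c * K * e * g x) := by
          rw [heq]; ring
        linarith [hpert]
      -- B' lower bound
      have hrpow1 : x ^ (-ν - 1) = x ^ (-ν) * x⁻¹ := by
        rw [show -ν - 1 = -ν + (-1) by ring, Real.rpow_add hx0, Real.rpow_neg_one]
      have hrpow2 : x ^ (-(1:ℝ)/(q:ℝ) - 1) = x ^ (-(1:ℝ)/(q:ℝ)) * x⁻¹ := by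
        rw [show -(1:ℝ)/(q:ℝ) - 1 = -(1:ℝ)/(q:ℝ) + (-1) by ring, Real.rpow_add hx0,
          Real.rpow_neg_one]
      have hB'eq : B' x = -(K * (ν * x ^ (-ν) + (1/(q:ℝ)) * x ^ (-(1:ℝ)/(q:ℝ))) / x) := by
        simp only [hB'def, hrpow1, hrpow2]
        field_simp
        ring
      have hq1 : (1:ℝ)/(q:ℝ) ≤ 1 := by
        rw [div_le_one hq']
        exact_mod_cast hq
      have hν_le : ν ≤ C := by rw [hCdef]; linarith
      have h1le : (1:ℝ)/(q:ℝ) ≤ C := by rw [hCdef]; linarith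
      have hr1 : (0:ℝ) < x ^ (-ν) := Real.rpow_pos_of_pos hx0 _
      have hr2 : (0:ℝ) < x ^ (-(1:ℝ)/(q:ℝ)) := Real.rpow_pos_of_pos hx0 _
      have hnum : ν * x ^ (-ν) + (1/(q:ℝ)) * x ^ (-(1:ℝ)/(q:ℝ)) ≤ C * g x := by
        have hA := mul_le_mul_of_nonneg_right hν_le hr1.le
        have hB := mul_le_mul_of_nonneg_right h1le hr2.le
        simp only [hgdef]
        calc ν * x ^ (-ν) + (1/(q:ℝ)) * x ^ (-(1:ℝ)/(q:ℝ))
            ≤ C * x ^ (-ν) + C * x ^ (-(1:ℝ)/(q:ℝ)) := add_le_add hA hB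
          _ = C * (x ^ (-ν) + x ^ (-(1:ℝ)/(q:ℝ))) := by ring
      have hBge : -(K * (C * g x) / x) ≤ B' x := by
        rw [hB'eq]
        apply neg_le_neg
        gcongr
      -- strict comparison
      have hx1e : x ^ (1 - (n:ℝ)/(q:ℝ)) = x * e := by
        rw [hedef, show (1 - (n:ℝ)/(q:ℝ)) = 1 + (-(n:ℝ)/(q:ℝ)) by ring,
          Real.rpow_add hx0, Real.rpow_one]
      have hxrpow : 2 * C / c ≤ x ^ (1 - (n:ℝ)/(q:ℝ)) :=
        le_trans ht2rpow (Real.rpow_le_rpow ht2pos.le hxt2 hexp_pos.le)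
      have hCe : C < c * (x * e) := by
        have : 2 * C ≤ c * (x * e) := by
          rw [← hx1e]
          calc 2 * C = c * (2 * C / c) := by field_simp
            _ ≤ c * x ^ (1 - (n:ℝ)/(q:ℝ)) := mul_le_mul_of_nonneg_left hxrpow hcpos.le
        linarith
      have hstrict : K * (C * g x) / x < c * K * e * g x := by
        rw [div_lt_iff₀ hx0]
        have h := mul_lt_mul_of_pos_right hCe (mul_pos hKpos hgx)
        calc K * (C * g x) = C * (K * g x) := by ring
          _ < c * (x * e) * (K * g x) := h
          _ = c * K * e * g x * x := by ring
      calc 2 * z x * D x ≤ -(c * K * e * g x) := hf'le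
        _ < -(K * (C * g x) / x) := by linarith
        _ ≤ B' x := hBge
    have hbar := image_le_of_deriv_right_lt_deriv_boundary' hfcont hf' hinit hBcont hB' bound
    exact hbar ⟨hT, le_refl T⟩
  constructor
  · exact fun t ht => main t ht
  · rw [tendsto_zero_iff_abs_tendsto_zero]
    have hsqto : Tendsto (fun t => Real.sqrt (K * g t)) atTop (nhds 0) := by
      have h := hgto.const_mul K
      rw [mul_zero] at h
      have := (Real.continuous_sqrt.tendsto 0).comp h
      simpa [Function.comp_def] using this
    apply squeeze_zero' (Eventually.of_forall fun t => abs_nonneg _) _ hsqto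
    filter_upwards [eventually_ge_atTop t2] with t ht
    calc |z t| = Real.sqrt ((z t) ^ 2) := (Real.sqrt_sq_eq_abs _).symm
      _ ≤ Real.sqrt (K * g t) := Real.sqrt_le_sqrt (main t ht)
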